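/- For the star graph S_n on n ≥ 2 vertices (one center adjacent to n−1 leaves), the boundary polynomial is B(S_n;x,y) = (x+y)^n + 1 + x((1+y)^{n−1} − (x+y)^{n−1} − 1). -/

import Mathlib

open Finset MvPolynomial

attribute [local instance] Classical.propDecidable

/-- The outer boundary of a vertex set `S`. -/
noncomputable def outerBoundary {V : Type*} [Fintype V] (G : SimpleGraph V) (S : Finset V) :
    Finset V :=
  Finset.univ.filter (fun v => v ∉ S ∧ ∃ u ∈ S, G.Adj u v)

/-- The boundary polynomial `B(G;x,y)` with `x = X 0`, `y = X 1`. -/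
noncomputable def boundaryPoly {V : Type*} [Fintype V] (G : SimpleGraph V) :
    MvPolynomial (Fin 2) ℤ :=
  ∑ S : Finset V, X 0 ^ (outerBoundary G S).card * X 1 ^ S.card

private lemma aux_binom {R : Type*} [CommRing R] (x y : R) (m : ℕ) :
    ∑ k ∈ Finset.range (m + 1), m.choose k • (x ^ (m - k) * y ^ k) = (x + y) ^ m := by
  rw [add_comm x y, add_pow]
  refine Finset.sum_congr rfl fun k hk => ?_
  rw [nsmul_eq_mul]; ring

private lemma star_main (m : ℕ) :
    boundaryPoly (completeBipartiteGraph (Fin 1) (Fin m)) =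
      ((X 0 : MvPolynomial (Fin 2) ℤ) + X 1) ^ (m + 1) + 1
      + X 0 * ((1 + X 1) ^ m - (X 0 + X 1) ^ m - 1) := by
  classical
  set x : MvPolynomial (Fin 2) ℤ := X 0 with hx
  set y : MvPolynomial (Fin 2) ℤ := X 1 with hy
  set G := completeBipartiteGraph (Fin 1) (Fin m) with hG
  set c : Fin 1 ⊕ Fin m := Sum.inl 0 with hc
  set t : Finset (Fin 1 ⊕ Fin m) := Finset.univ.erase c with ht
  have hct : c ∉ t := Finset.notMem_erase _ _
  have hcardV : Fintype.card (Fin 1 ⊕ Fin m) = m + 1 := by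
    simp [add_comm]
  have htcard : t.card = m := by
    rw [ht, Finset.card_erase_of_mem (Finset.mem_univ _), Finset.card_univ, hcardV]
    omega
  have hright : ∀ v ∈ t, Sum.isRight v := by
    intro v hv
    rcases v with a | b
    · have h0 : (Sum.inl a : Fin 1 ⊕ Fin m) = c := by
        rw [hc, Fin.eq_zero a]
      exact absurd (h0 ▸ hv) hct
    · simp
  have huniv : (Finset.univ : Finset (Fin 1 ⊕ Fin m)) = insert c t :=
    (Finset.insert_erase (Finset.mem_univ c)).symm
  -- boundary of a set not containing the center
  have hbd1 : ∀ S ∈ t.powerset, outerBoundary G S = if S = ∅ then ∅ else {c} := by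
    intro S hS
    rw [Finset.mem_powerset] at hS
    ext v
    simp only [outerBoundary, Finset.mem_filter, Finset.mem_univ, true_and]
    split_ifs with h
    · subst h; simp
    · obtain ⟨w, hw⟩ := Finset.nonempty_iff_ne_empty.2 h
      simp only [Finset.mem_singleton]
      constructor
      · rintro ⟨hvS, u, huS, hadj⟩
        have hu := hright u (hS huS)
        rcases v with a | b
        · rw [hc, Fin.eq_zero a]
        · exfalso
          rcases hadj with ⟨h1, _⟩ | ⟨_, h2⟩
          · rw [Sum.isLeft_iff] at h1
            obtain ⟨z, hz⟩ := h1
            rw [hz] at hu; simp at hu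
          · simp at h2
      · rintro rfl
        exact ⟨fun hcs => hct (hS hcs), w, hw,
          Or.inr ⟨hright w (hS hw), by rw [hc]; simp⟩⟩
  -- boundary of a set containing the center
  have hbd2 : ∀ S ∈ t.powerset, outerBoundary G (insert c S) = (insert c S)ᶜ := by
    intro S hS
    ext v
    simp only [outerBoundary, Finset.mem_filter, Finset.mem_univ, true_and,
      Finset.mem_compl]
    constructor
    · exact fun h => h.1
    · intro hv
      refine ⟨hv, c, Finset.mem_insert_self _ _, Or.inl ⟨by rw [hc]; simp, ?_⟩⟩
      rcases v with a | b
      · exfalso; apply hv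
        have h0 : (Sum.inl a : Fin 1 ⊕ Fin m) = c := by rw [hc, Fin.eq_zero a]
        rw [h0]; exact Finset.mem_insert_self _ _
      · simp
  have hcS : ∀ S ∈ t.powerset, c ∉ S := fun S hS hcs =>
    hct (Finset.mem_powerset.1 hS hcs)
  -- main computation
  rw [boundaryPoly, ← Finset.powerset_univ, huniv, Finset.sum_powerset_insert hct]
  have h1 : ∑ S ∈ t.powerset, (X 0 : MvPolynomial (Fin 2) ℤ) ^ (outerBoundary G S).card
        * X 1 ^ S.card = x * (1 + y) ^ m + (1 - x) := by
    have key : ∀ S ∈ t.powerset,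
        (X 0 : MvPolynomial (Fin 2) ℤ) ^ (outerBoundary G S).card * X 1 ^ S.card
          = x * y ^ S.card + if S = ∅ then 1 - x else 0 := by
      intro S hS
      rw [hbd1 S hS, ← hx, ← hy]
      split_ifs with h
      · subst h; simp
      · simp
    rw [Finset.sum_congr rfl key, Finset.sum_add_distrib,
      Finset.sum_ite_eq' t.powerset ∅ (fun _ => 1 - x),
      if_pos (Finset.empty_mem_powerset t), ← Finset.mul_sum]
    congr 2
    rw [Finset.sum_powerset_apply_card (fun k => (y : MvPolynomial (Fin 2) ℤ) ^ k), htcard]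
    have := aux_binom (1 : MvPolynomial (Fin 2) ℤ) y m
    simpa using this
  have h2 : ∑ S ∈ t.powerset, (X 0 : MvPolynomial (Fin 2) ℤ)
        ^ (outerBoundary G (insert c S)).card * X 1 ^ (insert c S).card
      = (x + y) ^ m * y := by
    have key : ∀ S ∈ t.powerset,
        (X 0 : MvPolynomial (Fin 2) ℤ) ^ (outerBoundary G (insert c S)).card
            * X 1 ^ (insert c S).card
          = (x ^ (m - S.card) * y ^ S.card) * y := by
      intro S hS
      rw [hbd2 S hS, Finset.card_compl, hcardV,
        Finset.card_insert_of_notMem (hcS S hS), ← hx, ← hy]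
      have hSm : S.card ≤ m :=
        le_trans (Finset.card_le_card (Finset.mem_powerset.1 hS)) (le_of_eq htcard)
      rw [show m + 1 - (S.card + 1) = m - S.card from by omega]
      ring
    rw [Finset.sum_congr rfl key, ← Finset.sum_mul]
    refine congrArg (· * y) ?_
    rw [Finset.sum_powerset_apply_card
      (fun k => (x : MvPolynomial (Fin 2) ℤ) ^ (m - k) * y ^ k), htcard]
    exact aux_binom x y m
  rw [h1, h2]
  ring

/-- Boundary polynomial of the star graph `S_n ≃ K_{1,n-1}`. -/
theorem boundaryPoly_star (n : ℕ) (hn : 2 ≤ n) :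
    boundaryPoly (completeBipartiteGraph (Fin 1) (Fin (n - 1))) =
      ((X 0 : MvPolynomial (Fin 2) ℤ) + X 1) ^ n + 1
      + X 0 * ((1 + X 1) ^ (n - 1) - (X 0 + X 1) ^ (n - 1) - 1) := by
  obtain ⟨m, rfl⟩ : ∃ m, n = m + 1 := ⟨n - 1, by omega⟩
  exact star_main m
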